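/- For every finite abelian group G of odd order and every r > 1, ms(G, r) > 1/r²: for every r-coloring of G there exists a monochromatic symmetric subset of size strictly greater than |G|/r². -/

import Mathlib

open Finset

/-- For a finite abelian group of odd order and r > 1, every r-coloring has a
monochromatic symmetric subset of size strictly greater than |G|/r². -/
theorem stmt_12 (G : Type) [AddCommGroup G] [Fintype G] (hodd : Odd (Fintype.card G))
    (r : ℕ) (hr : 1 < r) (χ : G → Fin r) :
    ∃ A : Set G, (∃ c, ∀ a ∈ A, χ a = c) ∧
      (∃ x : G, A = (fun a => 2 • x - a) '' A) ∧
      (Fintype.card G : ℝ) / (r : ℝ) ^ 2 < (A.ncard : ℝ) := by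
  classical
  set n := Fintype.card G with hn
  have hn0 : 0 < n := Fintype.card_pos
  have hr0 : 0 < r := by omega
  -- doubling is injective
  have hinj : Function.Injective (fun a : G => 2 • a) := by
    intro a b hab
    simp only at hab
    have h0 : 2 • (a - b) = 0 := by rw [smul_sub, hab, sub_self]
    have hd : addOrderOf (a - b) ∣ 2 := addOrderOf_dvd_of_nsmul_eq_zero h0
    have hc : addOrderOf (a - b) ∣ n := addOrderOf_dvd_card
    rcases (Nat.dvd_prime Nat.prime_two).mp hd with h1 | h2
    · have : a - b = 0 := AddMonoid.addOrderOf_eq_one_iff.mp h1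
      exact sub_eq_zero.mp this
    · exfalso
      rw [h2] at hc
      exact (Nat.not_even_iff_odd.mpr hodd) ((even_iff_two_dvd).mpr hc)
  have hbij : Function.Bijective (fun a : G => 2 • a) :=
    Finite.injective_iff_bijective.mp hinj
  -- basic algebraic facts
  have hcancel : ∀ x a : G, 2 • x - (2 • x - a) = a := fun x a => sub_sub_cancel _ _
  have hfix : ∀ x a : G, 2 • x - a = a → x = a := by
    intro x a h
    have : 2 • x = 2 • a := by
      rw [two_nsmul a, ← sub_eq_iff_eq_add.mp h]
    exact hinj this
  have hxx : ∀ x : G, 2 • x - x = x := by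
    intro x; rw [two_nsmul, add_sub_cancel_right]
  -- the symmetric pieces
  set F : G → Fin r → Finset G :=
    fun x c => univ.filter (fun a => χ a = c ∧ χ (2 • x - a) = c) with hF
  have hFsym : ∀ x c a, a ∈ F x c → 2 • x - a ∈ F x c := by
    intro x c a ha
    simp only [hF, mem_filter, mem_univ, true_and] at ha ⊢
    exact ⟨ha.2, by rw [hcancel]; exact ha.1⟩
  have hFmemx : ∀ x c, x ∈ F x c ↔ χ x = c := by
    intro x c
    simp only [hF, mem_filter, mem_univ, true_and, hxx x, and_self]
  -- parity of the pieces
  have hEeven : ∀ x c, Even ((F x c).erase x).card := by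
    intro x c
    have hz : ((((F x c).erase x).card : ℕ) : ZMod 2) = 0 := by
      have hzz : ∑ _a ∈ (F x c).erase x, (1 : ZMod 2) = 0 := by
        refine Finset.sum_involution (fun a _ => 2 • x - a) ?_ ?_ ?_ ?_
        · intro a ha; decide
        · intro a ha _
          intro hcontra
          have := hfix x a hcontra
          exact (Finset.ne_of_mem_erase ha) this.symm
        · intro a ha
          rcases Finset.mem_erase.mp ha with ⟨hne, haF⟩
          refine Finset.mem_erase.mpr ⟨?_, hFsym x c a haF⟩
          intro h
          have h' : 2 • x - a = x := h
          apply hne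
          rw [← hcancel x a, h', hxx]
        · intro a ha; exact hcancel x a
      calc ((((F x c).erase x).card : ℕ) : ZMod 2)
          = ∑ _a ∈ (F x c).erase x, (1 : ZMod 2) := by simp
        _ = 0 := hzz
    have := (ZMod.natCast_eq_zero_iff _ 2).mp hz
    exact even_iff_two_dvd.mpr this
  have hparO : ∀ x c, χ x = c → Odd ((F x c).card) := by
    intro x c hxc
    have hx : x ∈ F x c := (hFmemx x c).mpr hxc
    have := Finset.card_erase_add_one hx
    rcases hEeven x c with ⟨k, hk⟩
    exact ⟨k, by omega⟩
  have hparE : ∀ x c, χ x ≠ c → Even ((F x c).card) := by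
    intro x c hxc
    have hx : x ∉ F x c := fun h => hxc ((hFmemx x c).mp h)
    rw [← Finset.erase_eq_of_notMem hx]
    exact hEeven x c
  -- color class sizes
  set nc : Fin r → ℕ := fun c => (univ.filter (fun a => χ a = c)).card with hnc
  have hsumnc : ∑ c, nc c = n := by
    rw [hn, ← Finset.card_univ]
    exact (Finset.card_eq_sum_card_fiberwise (fun x _ => mem_univ (χ x))).symm
  -- counting: for each colour, summing pieces over all centres gives nc c ^ 2
  have hcount : ∀ c, ∑ x : G, (F x c).card = nc c ^ 2 := by
    intro c
    have hfiber : ∀ a : G, (univ.filter (fun x : G => χ (2 • x - a) = c)).card = nc c := by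
      intro a
      have e : G ≃ G := (Equiv.ofBijective _ hbij).trans (Equiv.subRight a)
      refine Finset.card_equiv ((Equiv.ofBijective _ hbij).trans (Equiv.subRight a)) ?_
      intro x
      simp [Equiv.subRight, Equiv.ofBijective]
    calc ∑ x : G, (F x c).card
        = ∑ x : G, ∑ a : G, (if χ a = c ∧ χ (2 • x - a) = c then 1 else 0) := by
          refine Finset.sum_congr rfl (fun x _ => ?_)
          rw [hF]; rw [Finset.card_filter]
      _ = ∑ a : G, ∑ x : G, (if χ a = c ∧ χ (2 • x - a) = c then 1 else 0) :=
          Finset.sum_comm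
      _ = ∑ a : G, (if χ a = c then nc c else 0) := by
          refine Finset.sum_congr rfl (fun a _ => ?_)
          by_cases h : χ a = c
          · simp only [h, true_and, if_true]
            rw [← hfiber a, Finset.card_filter]
          · simp [h]
      _ = nc c ^ 2 := by
          rw [Finset.sum_ite, Finset.sum_const, Finset.sum_const_zero, add_zero,
            smul_eq_mul]
          have h' : (univ.filter (fun x : G => χ x = c)).card = nc c := rfl
          rw [h']
          ring
  -- the maximum piece size
  set f : G × Fin r → ℕ := fun p => (F p.1 p.2).card with hf
  set M : ℕ := Finset.sup univ f with hM
  have hle : ∀ p : G × Fin r, f p ≤ M := fun p => Finset.le_sup (mem_univ p)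
  haveI hGne : Nonempty G := Fintype.card_pos_iff.mp hn0
  haveI : Nonempty (Fin r) := ⟨⟨0, by omega⟩⟩
  obtain ⟨p₀, -, hp₀⟩ := Finset.exists_mem_eq_sup (univ : Finset (G × Fin r))
    univ_nonempty f
  -- not all pieces have size M
  have hexlt : ∃ p : G × Fin r, f p < M := by
    obtain ⟨x0⟩ := hGne
    set c1 : Fin r := χ x0 with hc1
    set c2 : Fin r := if c1.val = 0 then ⟨1, hr⟩ else ⟨0, hr0⟩ with hc2
    have hne12 : c1 ≠ c2 := by
      have hv : c1.val ≠ c2.val := by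
        by_cases h : c1.val = 0
        · rw [hc2, if_pos h]; simp only [Fin.val_mk]; omega
        · rw [hc2, if_neg h]; simp only [Fin.val_mk]; omega
      exact fun hcon => hv (congrArg Fin.val hcon)
    have h1 : Odd (f (x0, c1)) := hparO x0 c1 rfl
    have h2 : Even (f (x0, c2)) := hparE x0 c2 hne12
    have hdiff : f (x0, c1) ≠ f (x0, c2) := by
      intro h
      rw [h] at h1
      exact (Nat.not_odd_iff_even.mpr h2) h1
    by_contra hcon
    push_neg at hcon
    have e1 : f (x0, c1) = M := le_antisymm (hle _) (hcon _)
    have e2 : f (x0, c2) = M := le_antisymm (hle _) (hcon _)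
    exact hdiff (e1.trans e2.symm)
  -- strict bound on the total
  have htotal : ∑ p : G × Fin r, f p < n * r * M := by
    obtain ⟨p, hp⟩ := hexlt
    calc ∑ p : G × Fin r, f p < ∑ _p : G × Fin r, M :=
          Finset.sum_lt_sum (fun i _ => hle i) ⟨p, mem_univ p, hp⟩
      _ = n * r * M := by
          rw [Finset.sum_const, Finset.card_univ, Fintype.card_prod, Fintype.card_fin,
            smul_eq_mul, hn]
  -- Cauchy–Schwarz
  have hSsum : ∑ p : G × Fin r, f p = ∑ c, nc c ^ 2 := by
    rw [Fintype.sum_prod_type]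
    rw [Finset.sum_comm]
    exact Finset.sum_congr rfl (fun c _ => hcount c)
  have hcs : n ^ 2 ≤ r * ∑ c, nc c ^ 2 := by
    have := sq_sum_le_card_mul_sum_sq (s := (univ : Finset (Fin r))) (f := nc)
    rwa [hsumnc, Finset.card_univ, Fintype.card_fin] at this
  have hkey : n < r * r * M := by
    have h1 : n * n < n * (r * r * M) := by
      calc n * n = n ^ 2 := by ring
        _ ≤ r * ∑ c, nc c ^ 2 := hcs
        _ = r * ∑ p : G × Fin r, f p := by rw [hSsum]
        _ < r * (n * r * M) := mul_lt_mul_of_pos_left htotal hr0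
        _ = n * (r * r * M) := by ring
    exact Nat.lt_of_mul_lt_mul_left h1
  -- assemble the answer
  obtain ⟨x₀, c₀⟩ := p₀
  refine ⟨(↑(F x₀ c₀) : Set G), ⟨c₀, ?_⟩, ⟨x₀, ?_⟩, ?_⟩
  · intro a ha
    simp only [Finset.coe_filter, Set.mem_setOf_eq, hF] at ha
    exact ha.2.1
  · ext b
    constructor
    · intro hb
      simp only [Finset.mem_coe] at hb
      exact ⟨2 • x₀ - b, by simp only [Finset.mem_coe]; exact hFsym x₀ c₀ b hb,
        hcancel x₀ b⟩
    · rintro ⟨a, ha, rfl⟩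
      simp only [Finset.mem_coe] at ha ⊢
      exact hFsym x₀ c₀ a ha
  · rw [Set.ncard_coe_finset]
    have hMeq : (F x₀ c₀).card = M := by rw [hM, hp₀]
    rw [hMeq]
    rw [div_lt_iff₀ (by positivity)]
    calc (n : ℝ) < ((r * r * M : ℕ) : ℝ) := Nat.cast_lt.mpr hkey
      _ = (M : ℝ) * (r : ℝ) ^ 2 := by push_cast; ring
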